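/- Let n ∈ ℕ and α, β > −1 be real, and define Y(z) = (1−tanh z)^(α/2)·(1+tanh z)^(β/2)·P_n^{(α,β)}(tanh z) for z ∈ ℝ. Then Y is twice differentiable on ℝ and satisfies Y''(z) + Ω(z)Y(z) = 0 for all z ∈ ℝ, where Ω(z) = (1/4)·[(L²−1)(1−tanh²z) − 2α²(1+tanh z) − 2β²(1−tanh z)]. -/

import Mathlib

open Real Filter Set

/-- Generalized binomial coefficient `C(t, k) = t(t-1)⋯(t-k+1)/k!`. -/
noncomputable def genBinom (t : ℝ) (k : ℕ) : ℝ :=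
  (∏ i ∈ Finset.range k, (t - i)) / (Nat.factorial k)

/-- The Jacobi polynomial `P_n^{(α,β)}(x)`. -/
noncomputable def jacobiP (n : ℕ) (α β : ℝ) (x : ℝ) : ℝ :=
  ∑ m ∈ Finset.range (n + 1),
    genBinom (n + α) m * genBinom (n + β) (n - m) * ((x - 1) / 2) ^ (n - m) * ((x + 1) / 2) ^ m

lemma genBinom_succ (t : ℝ) (k : ℕ) :
    genBinom t (k + 1) = genBinom t k * (t - k) / (k + 1) := by
  have h1 : ((Nat.factorial k : ℝ)) ≠ 0 := Nat.cast_ne_zero.2 (Nat.factorial_ne_zero k)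
  have h2 : ((k : ℝ) + 1) ≠ 0 := by positivity
  unfold genBinom
  rw [Finset.prod_range_succ, Nat.factorial_succ]
  push_cast
  rw [div_mul_eq_mul_div, div_div]
  rw [mul_comm ((k : ℝ) + 1)]

noncomputable def jc (n : ℕ) (α β : ℝ) (m : ℕ) : ℝ :=
  genBinom (n + α) m * genBinom (n + β) (n - m)

lemma jc_rec (n : ℕ) (α β : ℝ) (m : ℕ) (h : m < n) :
    ((m : ℝ) + 1) * (β + m + 1) * jc n α β (m + 1) =
      ((n : ℝ) + α - m) * ((n : ℝ) - m) * jc n α β m := by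
  obtain ⟨j, hj⟩ : ∃ j, n - m = j + 1 := ⟨n - m - 1, by omega⟩
  have hj' : n - (m + 1) = j := by omega
  have hjc : (j : ℝ) = (n : ℝ) - m - 1 := by
    have : (n : ℝ) - m = (j : ℝ) + 1 := by
      rw [← Nat.cast_sub h.le, hj]; push_cast; ring
    linarith
  have hnm : (0:ℝ) < (n : ℝ) - (m:ℝ) := by
    have := Nat.cast_lt (α := ℝ) |>.2 h; linarith
  unfold jc
  rw [hj', hj, genBinom_succ, genBinom_succ, hjc]
  have h2 : ((m : ℝ) + 1) ≠ 0 := by positivity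
  field_simp [hnm.ne']
  ring

lemma mono_deriv (C : ℝ) (p q : ℕ) (x : ℝ) :
    HasDerivAt (fun x : ℝ => C * ((x - 1) / 2) ^ p * ((x + 1) / 2) ^ q)
      (C * ((p : ℝ) / 2 * ((x - 1) / 2) ^ (p - 1) * ((x + 1) / 2) ^ q +
        (q : ℝ) / 2 * ((x - 1) / 2) ^ p * ((x + 1) / 2) ^ (q - 1))) x := by
  have ha : HasDerivAt (fun x : ℝ => (x - 1) / 2) (1 / 2) x := by
    simpa using ((hasDerivAt_id x).sub_const 1).div_const 2
  have hb : HasDerivAt (fun x : ℝ => (x + 1) / 2) (1 / 2) x := by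
    simpa using ((hasDerivAt_id x).add_const 1).div_const 2
  have h := ((ha.pow p).const_mul C).mul (hb.pow q)
  refine h.congr_deriv ?_
  simp only [Pi.pow_apply]
  ring

noncomputable def jP1 (n : ℕ) (α β : ℝ) (x : ℝ) : ℝ :=
  ∑ m ∈ Finset.range (n + 1), jc n α β m *
    ((↑(n - m) : ℝ) / 2 * ((x - 1) / 2) ^ (n - m - 1) * ((x + 1) / 2) ^ m +
     (m : ℝ) / 2 * ((x - 1) / 2) ^ (n - m) * ((x + 1) / 2) ^ (m - 1))

noncomputable def jP2 (n : ℕ) (α β : ℝ) (x : ℝ) : ℝ :=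
  ∑ m ∈ Finset.range (n + 1), jc n α β m *
    ((↑(n - m) : ℝ) / 2 *
      ((↑(n - m - 1) : ℝ) / 2 * ((x - 1) / 2) ^ (n - m - 1 - 1) * ((x + 1) / 2) ^ m +
       (m : ℝ) / 2 * ((x - 1) / 2) ^ (n - m - 1) * ((x + 1) / 2) ^ (m - 1)) +
     (m : ℝ) / 2 *
      ((↑(n - m) : ℝ) / 2 * ((x - 1) / 2) ^ (n - m - 1) * ((x + 1) / 2) ^ (m - 1) +
       (↑(m - 1) : ℝ) / 2 * ((x - 1) / 2) ^ (n - m) * ((x + 1) / 2) ^ (m - 1 - 1))) 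

lemma hasDerivAt_jacobiP (n : ℕ) (α β x : ℝ) :
    HasDerivAt (jacobiP n α β) (jP1 n α β x) x := by
  exact HasDerivAt.fun_sum fun m _ => mono_deriv _ _ _ x

lemma hasDerivAt_jP1 (n : ℕ) (α β x : ℝ) :
    HasDerivAt (jP1 n α β) (jP2 n α β x) x := by
  refine HasDerivAt.fun_sum fun m _ => ?_
  exact ((mono_deriv _ _ _ x).add (mono_deriv _ _ _ x)).const_mul (jc n α β m)

noncomputable def gmon (n : ℕ) (x : ℝ) (k : ℕ) : ℝ :=
  ((x - 1) / 2) ^ (n - k) * ((x + 1) / 2) ^ k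

noncomputable def Xc (n : ℕ) (α β : ℝ) (m : ℕ) : ℝ :=
  jc n α β m * ((n : ℝ) * ((n : ℝ) + α + β + 1) - 2 * (↑(n - m) : ℝ) * (m : ℝ)
    - (m : ℝ) * (α + 1) - (↑(n - m) : ℝ) * (β + 1))

noncomputable def Yc (n : ℕ) (α β : ℝ) (m : ℕ) : ℝ :=
  -(jc n α β m * (↑(n - m) : ℝ) * ((↑(n - m) : ℝ) + α))

noncomputable def Zc (n : ℕ) (α β : ℝ) (m : ℕ) : ℝ :=
  -(jc n α β m * (m : ℝ) * ((m : ℝ) + β))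

lemma stepA (n : ℕ) (α β x : ℝ) :
    (1 - x ^ 2) * jP2 n α β x + (β - α - (α + β + 2) * x) * jP1 n α β x
      + (n : ℝ) * ((n : ℝ) + α + β + 1) * jacobiP n α β x
    = ∑ m ∈ Finset.range (n + 1),
        (Xc n α β m * gmon n x m
          + Yc n α β m * (((x - 1) / 2) ^ (n - m - 1) * ((x + 1) / 2) ^ (m + 1))
          + Zc n α β m * (((x - 1) / 2) ^ (n - m + 1) * ((x + 1) / 2) ^ (m - 1))) := by
  rw [jP1, jP2, jacobiP, Finset.mul_sum, Finset.mul_sum, Finset.mul_sum,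
    ← Finset.sum_add_distrib, ← Finset.sum_add_distrib]
  refine Finset.sum_congr rfl fun m hm => ?_
  have hmn : m ≤ n := by
    have := Finset.mem_range.1 hm; omega
  obtain ⟨i, rfl⟩ : ∃ i, n = m + i := ⟨n - m, by omega⟩
  simp only [Xc, Yc, Zc, gmon, jc, Nat.add_sub_cancel_left,
    show m + i - m - 1 = i - 1 by omega,
    show m + i - m - 1 - 1 = i - 2 by omega, show m + i - m = i by omega,
    show m + i - m + 1 = i + 1 by omega]
  rcases m with _ | _ | m <;> rcases i with _ | _ | i <;>
    simp only [Nat.zero_sub, Nat.sub_zero, Nat.sub_self, Nat.add_sub_cancel,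
      Nat.succ_sub_one, Nat.reduceSubDiff, Nat.reduceSub] <;>
    push_cast <;> ring

lemma stepB (n : ℕ) (α β x : ℝ) :
    ∑ m ∈ Finset.range (n + 1),
        Yc n α β m * (((x - 1) / 2) ^ (n - m - 1) * ((x + 1) / 2) ^ (m + 1))
    = ∑ k ∈ Finset.range (n + 1), (-(jc n α β k * (k : ℝ) * ((k : ℝ) + β))) * gmon n x k := by
  conv_lhs => rw [Finset.sum_range_succ]
  conv_rhs => rw [Finset.sum_range_succ']
  have hYn : Yc n α β n = 0 := by simp [Yc, Nat.sub_self]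
  rw [hYn, zero_mul, add_zero, show -(jc n α β 0 * ((0:ℕ) : ℝ) * (((0:ℕ) : ℝ) + β)) * gmon n x 0 = 0 by
    simp, add_zero]
  refine Finset.sum_congr rfl fun m hm => ?_
  have hmn : m < n := Finset.mem_range.1 hm
  have hrec := jc_rec n α β m hmn
  have hcast : (↑(n - m) : ℝ) = (n : ℝ) - m := Nat.cast_sub hmn.le
  have hg : ((x - 1) / 2) ^ (n - m - 1) * ((x + 1) / 2) ^ (m + 1) = gmon n x (m + 1) := by
    rw [gmon, show n - (m + 1) = n - m - 1 by omega]
  rw [hg, Yc, hcast]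
  push_cast
  linear_combination (gmon n x (m + 1)) * hrec

lemma stepC (n : ℕ) (α β x : ℝ) :
    ∑ m ∈ Finset.range (n + 1),
        Zc n α β m * (((x - 1) / 2) ^ (n - m + 1) * ((x + 1) / 2) ^ (m - 1))
    = ∑ k ∈ Finset.range (n + 1),
        (-(jc n α β k * ((n : ℝ) + α - k) * ((n : ℝ) - k))) * gmon n x k := by
  conv_lhs => rw [Finset.sum_range_succ']
  conv_rhs => rw [Finset.sum_range_succ]
  have hZ0 : Zc n α β 0 = 0 := by simp [Zc]
  have hn : -(jc n α β n * ((n : ℝ) + α - n) * ((n : ℝ) - n)) * gmon n x n = 0 := by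
    ring_nf
  rw [hZ0, zero_mul, add_zero, hn, add_zero]
  refine Finset.sum_congr rfl fun m hm => ?_
  have hmn : m < n := Finset.mem_range.1 hm
  have hrec := jc_rec n α β m hmn
  have hcast : (↑(n - m) : ℝ) = (n : ℝ) - m := Nat.cast_sub hmn.le
  have hg : ((x - 1) / 2) ^ (n - (m + 1) + 1) * ((x + 1) / 2) ^ (m + 1 - 1) = gmon n x m := by
    rw [gmon, show n - (m + 1) + 1 = n - m by omega, show m + 1 - 1 = m by omega]
  rw [hg, Zc]
  push_cast
  linear_combination (-(gmon n x m)) * hrec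

lemma key (n : ℕ) (α β x : ℝ) :
    (1 - x ^ 2) * jP2 n α β x + (β - α - (α + β + 2) * x) * jP1 n α β x
      + (n : ℝ) * ((n : ℝ) + α + β + 1) * jacobiP n α β x = 0 := by
  rw [stepA, Finset.sum_add_distrib, Finset.sum_add_distrib, stepB, stepC,
    ← Finset.sum_add_distrib, ← Finset.sum_add_distrib]
  refine Finset.sum_eq_zero fun k hk => ?_
  have hkn : k ≤ n := by have := Finset.mem_range.1 hk; omega
  have hcast : (↑(n - k) : ℝ) = (n : ℝ) - k := Nat.cast_sub hkn
  rw [Xc, hcast]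
  ring

lemma mytanh_lt_one (x : ℝ) : Real.tanh x < 1 := by
  rw [Real.tanh_eq_sinh_div_cosh, div_lt_one (Real.cosh_pos x)]
  have h := Real.cosh_sub_sinh x
  have := Real.exp_pos (-x)
  linarith

lemma neg_one_lt_mytanh (x : ℝ) : -1 < Real.tanh x := by
  rw [Real.tanh_eq_sinh_div_cosh, lt_div_iff₀ (Real.cosh_pos x)]
  have h := Real.cosh_add_sinh x
  have := Real.exp_pos x
  linarith

lemma hasDerivAt_mytanh (x : ℝ) : HasDerivAt Real.tanh (1 - Real.tanh x ^ 2) x := by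
  have h := (Real.hasDerivAt_sinh x).div (Real.hasDerivAt_cosh x) (Real.cosh_pos x).ne'
  have hfun : (Real.sinh / Real.cosh) = Real.tanh :=
    funext fun y => (Real.tanh_eq_sinh_div_cosh y).symm
  rw [hfun] at h
  refine h.congr_deriv ?_
  rw [Real.tanh_eq_sinh_div_cosh]
  have hc := (Real.cosh_pos x).ne'
  have hsq := Real.cosh_sq x
  field_simp

lemma w_deriv (α β : ℝ) (F F' : ℝ → ℝ) (hF : ∀ x, HasDerivAt F (F' x) x) (z : ℝ) :
    HasDerivAt
      (fun z => (1 - Real.tanh z) ^ (α / 2) * (1 + Real.tanh z) ^ (β / 2) * F (Real.tanh z))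
      ((1 - Real.tanh z) ^ (α / 2) * (1 + Real.tanh z) ^ (β / 2) *
        ((1 - Real.tanh z ^ 2) * F' (Real.tanh z) +
          ((β * (1 - Real.tanh z) - α * (1 + Real.tanh z)) / 2) * F (Real.tanh z))) z := by
  have ht := hasDerivAt_mytanh z
  have h1m : (0:ℝ) < 1 - Real.tanh z := by have := mytanh_lt_one z; linarith
  have h1p : (0:ℝ) < 1 + Real.tanh z := by have := neg_one_lt_mytanh z; linarith
  have hA : HasDerivAt (fun z => (1 - Real.tanh z) ^ (α / 2))
      ((-(1 - Real.tanh z ^ 2)) * (α / 2) * (1 - Real.tanh z) ^ (α / 2 - 1)) z :=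
    (ht.const_sub 1).rpow_const (Or.inl h1m.ne')
  have hB : HasDerivAt (fun z => (1 + Real.tanh z) ^ (β / 2))
      ((1 - Real.tanh z ^ 2) * (β / 2) * (1 + Real.tanh z) ^ (β / 2 - 1)) z := by
    have := (ht.const_add 1).rpow_const (p := β / 2) (Or.inl h1p.ne')
    convert this using 2
  have hC : HasDerivAt (fun z => F (Real.tanh z)) (F' (Real.tanh z) * (1 - Real.tanh z ^ 2)) z :=
    (hF (Real.tanh z)).comp z ht
  have h := (hA.mul hB).mul hC
  refine h.congr_deriv ?_
  have e1 : (1 - Real.tanh z) ^ (α / 2) = (1 - Real.tanh z) ^ (α / 2 - 1) * (1 - Real.tanh z) := by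
    rw [← Real.rpow_add_one h1m.ne' (α / 2 - 1)]; norm_num
  have e2 : (1 + Real.tanh z) ^ (β / 2) = (1 + Real.tanh z) ^ (β / 2 - 1) * (1 + Real.tanh z) := by
    rw [← Real.rpow_add_one h1p.ne' (β / 2 - 1)]; norm_num
  simp only [Pi.mul_apply]
  rw [e1, e2]
  ring

noncomputable def jG (n : ℕ) (α β : ℝ) (x : ℝ) : ℝ :=
  (1 - x ^ 2) * jP1 n α β x + ((β * (1 - x) - α * (1 + x)) / 2) * jacobiP n α β x

noncomputable def jG1 (n : ℕ) (α β : ℝ) (x : ℝ) : ℝ :=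
  (-(2 * x)) * jP1 n α β x + (1 - x ^ 2) * jP2 n α β x
    + (-((α + β) / 2)) * jacobiP n α β x + ((β * (1 - x) - α * (1 + x)) / 2) * jP1 n α β x

lemma hasDerivAt_jG (n : ℕ) (α β x : ℝ) :
    HasDerivAt (jG n α β) (jG1 n α β x) x := by
  have hx2 : HasDerivAt (fun x : ℝ => x ^ 2) (2 * x) x := by
    simpa using hasDerivAt_pow 2 x
  have h1 : HasDerivAt (fun x : ℝ => 1 - x ^ 2) (-(2 * x)) x := hx2.const_sub 1
  have hE : HasDerivAt (fun x : ℝ => (β * (1 - x) - α * (1 + x)) / 2) (-((α + β) / 2)) x := by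
    have := ((((hasDerivAt_id x).const_sub 1).const_mul β).sub
      (((hasDerivAt_id x).const_add 1).const_mul α)).div_const 2
    refine this.congr_deriv ?_
    ring
  have h := (h1.mul (hasDerivAt_jP1 n α β x)).add (hE.mul (hasDerivAt_jacobiP n α β x))
  have hfun : jG n α β = fun x =>
      (1 - x ^ 2) * jP1 n α β x + ((β * (1 - x) - α * (1 + x)) / 2) * jacobiP n α β x := rfl
  rw [hfun]
  refine h.congr_deriv ?_
  rw [jG1]
  ring

theorem stmt4 (n : ℕ) (α β : ℝ) (hα : -1 < α) (hβ : -1 < β)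
    (Y : ℝ → ℝ)
    (hY : ∀ z : ℝ,
      Y z = (1 - Real.tanh z) ^ (α / 2) * (1 + Real.tanh z) ^ (β / 2) *
        jacobiP n α β (Real.tanh z))
    (L : ℝ) (hL : L = 2 * n + α + β + 1)
    (Ω : ℝ → ℝ)
    (hΩ : ∀ z : ℝ,
      Ω z = (1 / 4) * ((L ^ 2 - 1) * (1 - Real.tanh z ^ 2)
        - 2 * α ^ 2 * (1 + Real.tanh z) - 2 * β ^ 2 * (1 - Real.tanh z))) :
    (∀ z : ℝ, DifferentiableAt ℝ Y z ∧ DifferentiableAt ℝ (deriv Y) z) ∧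
    ∀ z : ℝ, deriv (deriv Y) z + Ω z * Y z = 0 := by
  have hYeq : Y = fun z => (1 - Real.tanh z) ^ (α / 2) * (1 + Real.tanh z) ^ (β / 2) *
      jacobiP n α β (Real.tanh z) := funext hY
  have hd1 : ∀ z, HasDerivAt Y ((1 - Real.tanh z) ^ (α / 2) * (1 + Real.tanh z) ^ (β / 2) *
      jG n α β (Real.tanh z)) z := by
    intro z
    rw [hYeq]
    have h := w_deriv α β (jacobiP n α β) (jP1 n α β) (hasDerivAt_jacobiP n α β) z
    have hjg : jG n α β (Real.tanh z) = (1 - Real.tanh z ^ 2) * jP1 n α β (Real.tanh z) +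
        ((β * (1 - Real.tanh z) - α * (1 + Real.tanh z)) / 2) * jacobiP n α β (Real.tanh z) := rfl
    rw [hjg]
    exact h
  have hderiv1 : deriv Y = fun z => (1 - Real.tanh z) ^ (α / 2) *
      (1 + Real.tanh z) ^ (β / 2) * jG n α β (Real.tanh z) := funext fun z => (hd1 z).deriv
  have hd2 : ∀ z, HasDerivAt (deriv Y)
      ((1 - Real.tanh z) ^ (α / 2) * (1 + Real.tanh z) ^ (β / 2) *
        ((1 - Real.tanh z ^ 2) * jG1 n α β (Real.tanh z) +
          ((β * (1 - Real.tanh z) - α * (1 + Real.tanh z)) / 2) * jG n α β (Real.tanh z))) z := by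
    intro z
    rw [hderiv1]
    exact w_deriv α β (jG n α β) (jG1 n α β) (hasDerivAt_jG n α β) z
  refine ⟨fun z => ⟨(hd1 z).differentiableAt, (hd2 z).differentiableAt⟩, fun z => ?_⟩
  rw [(hd2 z).deriv, hΩ z, hL, hY z]
  have hkey := key n α β (Real.tanh z)
  simp only [jG, jG1]
  linear_combination ((1 - Real.tanh z) ^ (α / 2) * (1 + Real.tanh z) ^ (β / 2) *
    (1 - Real.tanh z ^ 2)) * hkey
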